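/- Minimizing the linear proxy ∑_{r∈R}∑_{s∈S} p_r y_{r,s} exp(−κ d_{r,s}) over assignments satisfying the single-assignment constraint yields the same set of minimizers as minimizing the Kolm-Pollak EDE K(y) = −(1/κ)·ln((1/T)·∑_{r∈R} p_r exp(−κ ∑_s y_{r,s} d_{r,s})), when κ < 0, p_r > 0, and T = ∑_r p_r > 0. -/

import Mathlib

open Real Finset

lemma pick_one {S : Type*} [Fintype S] (f : S → ℝ)
    (h01 : ∀ s, f s = 0 ∨ f s = 1) (hsum : ∑ s, f s = 1) :
    ∃ s0, f s0 = 1 ∧ ∀ s, s ≠ s0 → f s = 0 := by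
  classical
  have hne : ∃ s0, f s0 ≠ 0 := by
    by_contra h
    push_neg at h
    simp [h] at hsum
  obtain ⟨s0, hs0⟩ := hne
  have h1 : f s0 = 1 := (h01 s0).resolve_left hs0
  refine ⟨s0, h1, ?_⟩
  have hnn : ∀ s ∈ Finset.univ.erase s0, 0 ≤ f s := by
    intro s _
    rcases h01 s with h | h <;> simp [h]
  have hsum' : ∑ s ∈ Finset.univ.erase s0, f s = 0 := by
    have := Finset.add_sum_erase Finset.univ f (Finset.mem_univ s0)
    rw [hsum, h1] at this
    linarith
  intro s hs
  have := (Finset.sum_eq_zero_iff_of_nonneg hnn).mp hsum' s (by simp [hs])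
  exact this

theorem stmt_1 {R S : Type*} [Fintype R] [Fintype S] [Nonempty R]
    (p : R → ℝ) (hp : ∀ r, 0 < p r) (κ : ℝ) (hκ : κ < 0) (d : R → S → ℝ)
    (T : ℝ) (hT : T = ∑ r, p r)
    (F : Set (R → S → ℝ))
    (hF : F = {y | (∀ r s, y r s = 0 ∨ y r s = 1) ∧ ∀ r, ∑ s, y r s = 1})
    (K Kbar : (R → S → ℝ) → ℝ)
    (hK : ∀ y, K y =
      -(1/κ) * Real.log ((1/T) * ∑ r, p r * Real.exp (-κ * ∑ s, y r s * d r s)))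
    (hKbar : ∀ y, Kbar y = ∑ r, ∑ s, p r * y r s * Real.exp (-κ * d r s)) :
    {y ∈ F | ∀ y' ∈ F, Kbar y ≤ Kbar y'} = {y ∈ F | ∀ y' ∈ F, K y ≤ K y'} := by
  set A : (R → S → ℝ) → ℝ := fun y => ∑ r, p r * Real.exp (-κ * ∑ s, y r s * d r s)
  -- On F, A = Kbar
  have hAKbar : ∀ y ∈ F, A y = Kbar y := by
    intro y hy
    rw [hF] at hy
    obtain ⟨h01, hsum⟩ := hy
    rw [hKbar]
    apply Finset.sum_congr rfl
    intro r _
    obtain ⟨s0, hs1, hs0⟩ := pick_one (y r) (h01 r) (hsum r)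
    have hd : ∑ s, y r s * d r s = d r s0 := by
      rw [Finset.sum_eq_single s0]
      · rw [hs1, one_mul]
      · intro s _ hs; rw [hs0 s hs, zero_mul]
      · intro h; exact absurd (Finset.mem_univ s0) h
    have he : ∑ s, p r * y r s * Real.exp (-κ * d r s)
        = p r * Real.exp (-κ * d r s0) := by
      rw [Finset.sum_eq_single s0]
      · rw [hs1, mul_one]
      · intro s _ hs; rw [hs0 s hs, mul_zero, zero_mul]
      · intro h; exact absurd (Finset.mem_univ s0) h
    rw [hd, he]
  have hApos : ∀ y, 0 < A y :=
    fun y => Finset.sum_pos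
      (fun r _ => mul_pos (hp r) (Real.exp_pos _)) Finset.univ_nonempty
  have hTpos : 0 < T := by
    rw [hT]; exact Finset.sum_pos (fun r _ => hp r) Finset.univ_nonempty
  have hc : 0 < -(1/κ) := by
    have : 1/κ < 0 := one_div_neg.mpr hκ
    linarith
  have hKiff : ∀ y y', K y ≤ K y' ↔ A y ≤ A y' := by
    intro y y'
    rw [hK, hK]
    constructor
    · intro h
      have hlog := le_of_mul_le_mul_left (by linarith [h] : -(1/κ) * Real.log ((1/T) * A y) ≤ -(1/κ) * Real.log ((1/T) * A y')) hc
      have := (Real.log_le_log_iff (mul_pos (one_div_pos.mpr hTpos) (hApos y)) (mul_pos (one_div_pos.mpr hTpos) (hApos y'))).mp hlog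
      have ht : 0 < 1/T := by positivity
      exact le_of_mul_le_mul_left this ht
    · intro h
      have ht : (0:ℝ) < 1/T := by positivity
      have h2 : (1/T) * A y ≤ (1/T) * A y' := by
        exact mul_le_mul_of_nonneg_left h ht.le
      have hlog := Real.log_le_log_iff (mul_pos (one_div_pos.mpr hTpos) (hApos y)) (mul_pos (one_div_pos.mpr hTpos) (hApos y')) |>.mpr h2
      exact mul_le_mul_of_nonneg_left hlog hc.le
  ext y
  simp only [Set.mem_setOf_eq, Set.sep_setOf]
  constructor
  · rintro ⟨hyF, hmin⟩
    refine ⟨hyF, fun y' hy' => ?_⟩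
    rw [hKiff, hAKbar y hyF, hAKbar y' hy']
    exact hmin y' hy'
  · rintro ⟨hyF, hmin⟩
    refine ⟨hyF, fun y' hy' => ?_⟩
    rw [← hAKbar y hyF, ← hAKbar y' hy', ← hKiff]
    exact hmin y' hy'
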